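/- Let M = [[A, Bᵀ],[B, D]] ∈ ℝ^{(m+n)×(m+n)} be nonsingular, R the structure matrix R = [[x₁ᵀ ⊗ I_m, I_m ⊗ x₂ᵀ, 0],[0, x₁ᵀ ⊗ I_n, x₂ᵀ ⊗ I_n]], Φ = diag(Φ_sym, I_{mn+n²}) where Φ_sym is the symmetric-structure matrix for m×m symmetric matrices, and D_E = diag(D_sym, I_{mn+n²}) with D_sym the diagonal scaling making ‖A‖_F = ‖D_sym a‖_2. Then the structured normwise condition number satisfies ‖M⁻¹ [R Φ D_E⁻¹, −I_{m+n}]‖_2 ≤ ‖M⁻¹ [R, −I_{m+n}]‖_2, i.e., the structured normwise condition number is at most the unstructured one. -/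

import Mathlib

open Matrix
open scoped Matrix.Norms.L2Operator

/-- The symmetric basis matrices. -/
def Ssym {m : ℕ} (p : {q : Fin m × Fin m // q.1 ≤ q.2}) : Matrix (Fin m) (Fin m) ℝ :=
  if p.1.1 = p.1.2 then Matrix.single p.1.1 p.1.2 1
  else Matrix.single p.1.1 p.1.2 1 + Matrix.single p.1.2 p.1.1 1

/-- The matrix whose columns are `vec (S_{ij})` for `i ≤ j`. -/
def PhiSym (m : ℕ) : Matrix (Fin m × Fin m) {q : Fin m × Fin m // q.1 ≤ q.2} ℝ :=
  fun q p => Ssym p q.2 q.1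

/-- The structure matrix
`R = [[x₁ᵀ ⊗ I_m, I_m ⊗ x₂ᵀ, 0],[0, x₁ᵀ ⊗ I_n, x₂ᵀ ⊗ I_n]]`. -/
def Rmat {m n : ℕ} (x₁ : Fin m → ℝ) (x₂ : Fin n → ℝ) :
    Matrix (Fin m ⊕ Fin n)
      ((Fin m × Fin m) ⊕ ((Fin m × Fin n) ⊕ (Fin n × Fin n))) ℝ :=
  Matrix.of fun r c =>
    match r, c with
    | Sum.inl i, Sum.inl (j, i') => x₁ j * (if i = i' then 1 else 0)
    | Sum.inl i, Sum.inr (Sum.inl (j, l)) => (if i = j then 1 else 0) * x₂ l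
    | Sum.inl _, Sum.inr (Sum.inr _) => 0
    | Sum.inr _, Sum.inl _ => 0
    | Sum.inr k, Sum.inr (Sum.inl (j, l)) => x₁ j * (if k = l then 1 else 0)
    | Sum.inr k, Sum.inr (Sum.inr (l, k')) => x₂ l * (if k = k' then 1 else 0)

/-- `Φ = diag(Φ_sym, I_{mn+n²})`. -/
def PhiE (m n : ℕ) :
    Matrix ((Fin m × Fin m) ⊕ ((Fin m × Fin n) ⊕ (Fin n × Fin n)))
      ({q : Fin m × Fin m // q.1 ≤ q.2} ⊕ ((Fin m × Fin n) ⊕ (Fin n × Fin n))) ℝ :=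
  Matrix.fromBlocks (PhiSym m) 0 0 1

/-- `D_E⁻¹ = diag(D_sym⁻¹, I_{mn+n²})`. -/
noncomputable def DEinv (m n : ℕ) :
    Matrix ({q : Fin m × Fin m // q.1 ≤ q.2} ⊕ ((Fin m × Fin n) ⊕ (Fin n × Fin n)))
      ({q : Fin m × Fin m // q.1 ≤ q.2} ⊕ ((Fin m × Fin n) ⊕ (Fin n × Fin n))) ℝ :=
  Matrix.diagonal (Sum.elim
    (fun p => if p.1.1 = p.1.2 then (1 : ℝ) else (Real.sqrt 2)⁻¹) fun _ => 1)

lemma Ssym_apply {m : ℕ} (p : {q : Fin m × Fin m // q.1 ≤ q.2}) (j i : Fin m) :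
    Ssym p j i = if (p.1.1 = j ∧ p.1.2 = i) ∨ (p.1.1 = i ∧ p.1.2 = j) then 1 else 0 := by
  obtain ⟨⟨a, b⟩, hab⟩ := p
  simp only [Ssym, Matrix.single]
  by_cases h : a = b <;> simp [h, Matrix.of_apply, Matrix.add_apply] <;> aesop

lemma phiSym_mul (m : ℕ) :
    (PhiSym m)ᵀ * PhiSym m =
      Matrix.diagonal (fun p : {q : Fin m × Fin m // q.1 ≤ q.2} =>
        if p.1.1 = p.1.2 then (1 : ℝ) else 2) := by
  ext p p'
  obtain ⟨⟨a, b⟩, hab⟩ := p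
  obtain ⟨⟨c, d⟩, hcd⟩ := p'
  have hab' : a ≤ b := hab
  have hcd' : c ≤ d := hcd
  simp only [Matrix.mul_apply, Matrix.transpose_apply, PhiSym, Ssym_apply, Matrix.diagonal]
  rw [Fintype.sum_prod_type]
  by_cases h : a = c ∧ b = d
  · obtain ⟨rfl, rfl⟩ := h
    by_cases hd : a = b
    · subst hd
      have key : ∀ i j : Fin m,
          (if (a = j ∧ a = i) ∨ (a = i ∧ a = j) then (1:ℝ) else 0) *
          (if (a = j ∧ a = i) ∨ (a = i ∧ a = j) then (1:ℝ) else 0) =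
          if a = j ∧ a = i then (1:ℝ) else 0 := by
        intro i j
        have hc : ((a = j ∧ a = i) ∨ (a = i ∧ a = j)) ↔ (a = j ∧ a = i) := by tauto
        rw [if_congr hc rfl rfl]
        split_ifs <;> norm_num
      simp only [key]
      simp [ite_and, Finset.sum_ite_eq]
    · have key : ∀ i j : Fin m,
          (if (a = j ∧ b = i) ∨ (a = i ∧ b = j) then (1:ℝ) else 0) *
          (if (a = j ∧ b = i) ∨ (a = i ∧ b = j) then (1:ℝ) else 0) =
          (if a = j ∧ b = i then (1:ℝ) else 0) + (if a = i ∧ b = j then (1:ℝ) else 0) := by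
        intro i j
        split_ifs with h1 h2 h3 h2 h3 <;> simp_all <;> aesop
      simp only [key, Finset.sum_add_distrib]
      have e1 : (∑ x : Fin m, ∑ y : Fin m, if a = y ∧ b = x then (1:ℝ) else 0) = 1 := by
        simp [ite_and, Finset.sum_ite_eq]
      have e2 : (∑ x : Fin m, ∑ y : Fin m, if a = x ∧ b = y then (1:ℝ) else 0) = 1 := by
        simp [ite_and, Finset.sum_ite_eq]
      rw [e1, e2]
      simp [hd]
      norm_num
  · have hfin : ∀ i j : Fin m,
        (if (a = j ∧ b = i) ∨ (a = i ∧ b = j) then (1:ℝ) else 0) *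
        (if (c = j ∧ d = i) ∨ (c = i ∧ d = j) then (1:ℝ) else 0) = 0 := by
      intro i j
      split_ifs with h1 h2 <;> try simp
      exfalso
      apply h
      rcases h1 with ⟨h1a, h1b⟩ | ⟨h1a, h1b⟩ <;> rcases h2 with ⟨h2a, h2b⟩ | ⟨h2a, h2b⟩ <;>
        first
        | exact ⟨h1a.trans h2a.symm, h1b.trans h2b.symm⟩
        | · have e1 : a = d := h1a.trans h2b.symm
            have e2 : b = c := h1b.trans h2a.symm
            rw [← e2, ← e1] at hcd'
            have hab2 : a = b := le_antisymm hab' hcd'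
            exact ⟨hab2.trans e2, hab2.symm.trans e1⟩
    simp only [hfin, Finset.sum_const_zero]
    have : ¬ ((⟨(a,b), hab⟩ : {q : Fin m × Fin m // q.1 ≤ q.2}) = ⟨(c,d), hcd⟩) := by
      simp [Subtype.ext_iff, Prod.ext_iff]; tauto
    simp [Matrix.of_apply, this]

lemma phiE_DEinv_mul (m n : ℕ) :
    (PhiE m n * DEinv m n)ᵀ * (PhiE m n * DEinv m n) = 1 := by
  set dσ : {q : Fin m × Fin m // q.1 ≤ q.2} → ℝ :=
    fun p => if p.1.1 = p.1.2 then (1 : ℝ) else (Real.sqrt 2)⁻¹ with hdσ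
  have hD : DEinv m n = Matrix.fromBlocks (Matrix.diagonal dσ) 0 0 1 := by
    rw [DEinv, ← Matrix.diagonal_one, Matrix.fromBlocks_diagonal]
  have hP : PhiE m n * DEinv m n =
      Matrix.fromBlocks (PhiSym m * Matrix.diagonal dσ) 0 0 1 := by
    rw [PhiE, hD, Matrix.fromBlocks_multiply]
    simp
  have hval : ∀ p : {q : Fin m × Fin m // q.1 ≤ q.2},
      dσ p * ((if (p : Fin m × Fin m).1 = (p : Fin m × Fin m).2 then (1:ℝ) else 2) * dσ p)
        = 1 := by
    intro p
    by_cases h : (p : Fin m × Fin m).1 = (p : Fin m × Fin m).2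
    · simp [hdσ, h]
    · have h2 : Real.sqrt 2 * Real.sqrt 2 = 2 := Real.mul_self_sqrt (by norm_num)
      simp only [hdσ, h, if_false]
      rw [show (Real.sqrt 2)⁻¹ * (2 * (Real.sqrt 2)⁻¹) = 2 * (Real.sqrt 2 * Real.sqrt 2)⁻¹
        by ring, h2]
      norm_num
  have hinner : (PhiSym m * Matrix.diagonal dσ)ᵀ * (PhiSym m * Matrix.diagonal dσ) = 1 := by
    rw [Matrix.transpose_mul, Matrix.diagonal_transpose, Matrix.mul_assoc,
      ← Matrix.mul_assoc (PhiSym m)ᵀ, phiSym_mul, Matrix.diagonal_mul_diagonal,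
      Matrix.diagonal_mul_diagonal]
    simp only [hval]
    exact Matrix.diagonal_one
  rw [hP, Matrix.fromBlocks_transpose, Matrix.fromBlocks_multiply]
  simp only [Matrix.transpose_zero, Matrix.transpose_one, Matrix.mul_zero, Matrix.zero_mul,
    Matrix.mul_one, Matrix.one_mul, add_zero, zero_add]
  rw [hinner, Matrix.fromBlocks_one]

lemma l2_norm_le_one_of_mul_eq_one {k l : Type*} [Fintype k] [Fintype l] [DecidableEq l]
    (Q : Matrix k l ℝ) (h : Qᴴ * Q = 1) : ‖Q‖ ≤ 1 := by
  have h1 : ‖Q‖ * ‖Q‖ = ‖(1 : Matrix l l ℝ)‖ := by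
    rw [← Matrix.l2_opNorm_conjTranspose_mul_self, h]
  have ht : ‖(1 : Matrix l l ℝ)‖ * ‖(1 : Matrix l l ℝ)‖ = ‖(1 : Matrix l l ℝ)‖ := by
    simpa using (Matrix.l2_opNorm_conjTranspose_mul_self (1 : Matrix l l ℝ)).symm
  nlinarith [norm_nonneg Q, norm_nonneg (1 : Matrix l l ℝ), sq_nonneg (‖Q‖ - 1),
    sq_nonneg (‖(1 : Matrix l l ℝ)‖ - 1)]

set_option synthInstance.maxSize 2000

/-- The structured normwise condition-number numerator is bounded by the
unstructured one: `‖M⁻¹ [R Φ D_E⁻¹, −I]‖₂ ≤ ‖M⁻¹ [R, −I]‖₂` (spectral norms). -/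
theorem structured_normwise_le_unstructured
    {m n : ℕ} (A : Matrix (Fin m) (Fin m) ℝ) (hA : Aᵀ = A)
    (B : Matrix (Fin n) (Fin m) ℝ) (D : Matrix (Fin n) (Fin n) ℝ)
    (M : Matrix (Fin m ⊕ Fin n) (Fin m ⊕ Fin n) ℝ)
    (hMdef : M = Matrix.fromBlocks A Bᵀ B D) (hM : IsUnit M.det)
    (x₁ : Fin m → ℝ) (x₂ : Fin n → ℝ) :
    ‖M⁻¹ * Matrix.fromCols (Rmat x₁ x₂ * PhiE m n * DEinv m n)
        (-(1 : Matrix (Fin m ⊕ Fin n) (Fin m ⊕ Fin n) ℝ))‖ ≤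
      ‖M⁻¹ * Matrix.fromCols (Rmat x₁ x₂)
        (-(1 : Matrix (Fin m ⊕ Fin n) (Fin m ⊕ Fin n) ℝ))‖ := by
  set Q := Matrix.fromBlocks (PhiE m n * DEinv m n) 0 0
    (1 : Matrix (Fin m ⊕ Fin n) (Fin m ⊕ Fin n) ℝ) with hQdef
  have hfact : Matrix.fromCols (Rmat x₁ x₂ * PhiE m n * DEinv m n)
      (-(1 : Matrix (Fin m ⊕ Fin n) (Fin m ⊕ Fin n) ℝ)) =
      Matrix.fromCols (Rmat x₁ x₂)
        (-(1 : Matrix (Fin m ⊕ Fin n) (Fin m ⊕ Fin n) ℝ)) * Q := by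
    rw [hQdef, Matrix.fromCols_mul_fromBlocks]
    simp [Matrix.mul_assoc]
  have hQtQ : Qᴴ * Q = 1 := by
    have hQconj : Qᴴ = Qᵀ := by
      ext i j; simp [Matrix.conjTranspose_apply]
    rw [hQconj, hQdef, Matrix.fromBlocks_transpose, Matrix.fromBlocks_multiply]
    simp only [Matrix.transpose_zero, Matrix.transpose_one, Matrix.mul_zero, Matrix.zero_mul,
      Matrix.mul_one, Matrix.one_mul, add_zero, zero_add]
    rw [phiE_DEinv_mul, Matrix.fromBlocks_one]
  have hQ1 : ‖Q‖ ≤ 1 := l2_norm_le_one_of_mul_eq_one Q hQtQ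
  calc ‖M⁻¹ * Matrix.fromCols (Rmat x₁ x₂ * PhiE m n * DEinv m n)
        (-(1 : Matrix (Fin m ⊕ Fin n) (Fin m ⊕ Fin n) ℝ))‖
      = ‖(M⁻¹ * Matrix.fromCols (Rmat x₁ x₂)
          (-(1 : Matrix (Fin m ⊕ Fin n) (Fin m ⊕ Fin n) ℝ))) * Q‖ := by
        rw [hfact, Matrix.mul_assoc]
    _ ≤ ‖M⁻¹ * Matrix.fromCols (Rmat x₁ x₂)
          (-(1 : Matrix (Fin m ⊕ Fin n) (Fin m ⊕ Fin n) ℝ))‖ * ‖Q‖ :=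
        Matrix.l2_opNorm_mul _ _
    _ ≤ _ := by
        have := norm_nonneg (M⁻¹ * Matrix.fromCols (Rmat x₁ x₂)
          (-(1 : Matrix (Fin m ⊕ Fin n) (Fin m ⊕ Fin n) ℝ)))
        nlinarith
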